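/- Exponential decay bootstrap: let 0 < γ < δ and let h ∈ C²([0,∞), ℝ²) satisfy |d/dt (e^{−γt} h'(t))| ≤ C e^{−δt} |h(t)| for all t ≥ 0 with some constant C > 0, together with the a priori bound |h(t)| ≤ C' e^{(γ/2)t} and lim_{t→∞} e^{−γt} h'(t) = 0. Then h'(t) decays exponentially as t → ∞ and the limit lim_{t→∞} h(t) exists. -/

import Mathlib

open Set Filter Real

lemma mono_cmp (φ ψ φ' ψ' : ℝ → ℝ)
    (hφ : ∀ t ∈ Set.Ici (0:ℝ), HasDerivWithinAt φ (φ' t) (Set.Ici 0) t)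
    (hψ : ∀ t ∈ Set.Ici (0:ℝ), HasDerivWithinAt ψ (ψ' t) (Set.Ici 0) t)
    (hle : ∀ t ∈ Set.Ici (0:ℝ), φ' t ≤ ψ' t) :
    ∀ t T : ℝ, 0 ≤ t → t ≤ T → φ T - φ t ≤ ψ T - ψ t := by
  have hcont : ContinuousOn (fun s => ψ s - φ s) (Set.Ici 0) := fun t ht =>
    ((hψ t ht).sub (hφ t ht)).continuousWithinAt
  have hmono : MonotoneOn (fun s => ψ s - φ s) (Set.Ici 0) := by
    apply monotoneOn_of_hasDerivWithinAt_nonneg (convex_Ici 0) hcont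
      (f' := fun s => ψ' s - φ' s)
    · intro x hx
      rw [interior_Ici] at hx ⊢
      exact (((hψ x (Ioi_subset_Ici_self hx)).sub (hφ x (Ioi_subset_Ici_self hx))).mono Ioi_subset_Ici_self)
    · intro x hx
      rw [interior_Ici] at hx
      exact sub_nonneg.2 (hle x (Ioi_subset_Ici_self hx))
  intro t T ht hT
  have := hmono (Set.mem_Ici.2 ht) (Set.mem_Ici.2 (ht.trans hT)) hT
  simp only at this
  linarith

lemma abs_incr_le (φ φ' : ℝ → ℝ)
    (hφ : ∀ t ∈ Set.Ici (0:ℝ), HasDerivWithinAt φ (φ' t) (Set.Ici 0) t)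
    (M a : ℝ) (ha : a ≠ 0)
    (hb : ∀ t ∈ Set.Ici (0:ℝ), |φ' t| ≤ M * Real.exp (a * t)) :
    ∀ t T : ℝ, 0 ≤ t → t ≤ T →
      |φ T - φ t| ≤ M / a * (Real.exp (a * T) - Real.exp (a * t)) := by
  have hψ : ∀ t ∈ Set.Ici (0:ℝ),
      HasDerivWithinAt (fun s => M / a * Real.exp (a * s)) (M * Real.exp (a * t))
        (Set.Ici 0) t := by
    intro t _
    have h1 : HasDerivAt (fun s : ℝ => Real.exp (a * s)) (Real.exp (a * t) * a) t := by
      simpa using (HasDerivAt.exp ((hasDerivAt_id t).const_mul a))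
    have h2 := (h1.const_mul (M / a)).hasDerivWithinAt (s := Set.Ici 0)
    refine h2.congr_deriv ?_
    rw [mul_comm (Real.exp (a * t)) a, ← mul_assoc, div_mul_cancel₀ _ ha]
  intro t T ht hT
  rw [abs_le]
  constructor
  · have := mono_cmp (fun s => -φ s) (fun s => M / a * Real.exp (a * s))
      (fun s => -φ' s) (fun s => M * Real.exp (a * s))
      (fun s hs => (hφ s hs).neg) hψ
      (fun s hs => neg_le.1 (abs_le.1 (hb s hs)).1) t T ht hT
    linarith
  · have := mono_cmp φ (fun s => M / a * Real.exp (a * s))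
      φ' (fun s => M * Real.exp (a * s)) hφ hψ
      (fun s hs => (abs_le.1 (hb s hs)).2) t T ht hT
    linarith

lemma sqrt_sq_add_sq_le (a b : ℝ) : Real.sqrt (a ^ 2 + b ^ 2) ≤ |a| + |b| := by
  rw [show (|a| + |b|) = Real.sqrt ((|a| + |b|) ^ 2) from
    (Real.sqrt_sq (by positivity)).symm]
  apply Real.sqrt_le_sqrt
  have h1 : 0 ≤ |a| * |b| := by positivity
  have h2 : |a| ^ 2 = a ^ 2 := sq_abs a
  have h3 : |b| ^ 2 = b ^ 2 := sq_abs b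
  nlinarith

lemma abs_le_sqrt_sq_add_sq (a b : ℝ) : |a| ≤ Real.sqrt (a ^ 2 + b ^ 2) := by
  rw [← Real.sqrt_sq_eq_abs]
  exact Real.sqrt_le_sqrt (by nlinarith [sq_nonneg b])

theorem stmt16 (γ δ C C' : ℝ) (hγ : 0 < γ) (hδ : γ < δ) (hC : 0 < C) (hC' : 0 < C')
    (h₁ h₂ h₁' h₂' h₁'' h₂'' : ℝ → ℝ)
    (hd1 : ∀ t ∈ Set.Ici (0:ℝ), HasDerivWithinAt h₁ (h₁' t) (Set.Ici 0) t)
    (hd2 : ∀ t ∈ Set.Ici (0:ℝ), HasDerivWithinAt h₂ (h₂' t) (Set.Ici 0) t)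
    (hd1' : ∀ t ∈ Set.Ici (0:ℝ), HasDerivWithinAt h₁' (h₁'' t) (Set.Ici 0) t)
    (hd2' : ∀ t ∈ Set.Ici (0:ℝ), HasDerivWithinAt h₂' (h₂'' t) (Set.Ici 0) t)
    (hcont1 : ContinuousOn h₁'' (Set.Ici 0)) (hcont2 : ContinuousOn h₂'' (Set.Ici 0))
    (hineq : ∀ t ∈ Set.Ici (0:ℝ),
      Real.sqrt ((Real.exp (-γ * t) * (h₁'' t - γ * h₁' t)) ^ 2
          + (Real.exp (-γ * t) * (h₂'' t - γ * h₂' t)) ^ 2)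
        ≤ C * Real.exp (-δ * t) * Real.sqrt (h₁ t ^ 2 + h₂ t ^ 2))
    (hgrowth : ∀ t ∈ Set.Ici (0:ℝ),
      Real.sqrt (h₁ t ^ 2 + h₂ t ^ 2) ≤ C' * Real.exp (γ / 2 * t))
    (hlim1 : Filter.Tendsto (fun t => Real.exp (-γ * t) * h₁' t) Filter.atTop (nhds 0))
    (hlim2 : Filter.Tendsto (fun t => Real.exp (-γ * t) * h₂' t) Filter.atTop (nhds 0)) :
    (∃ c > (0:ℝ), ∃ A : ℝ, ∀ t ≥ (0:ℝ),
        Real.sqrt (h₁' t ^ 2 + h₂' t ^ 2) ≤ A * Real.exp (-c * t)) ∧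
    (∃ L₁ L₂ : ℝ, Filter.Tendsto h₁ Filter.atTop (nhds L₁) ∧
        Filter.Tendsto h₂ Filter.atTop (nhds L₂)) := by
  set ε : ℝ := min (γ / 2) ((δ - γ) / 2) with hεdef
  have hε : 0 < ε := lt_min (by linarith) (by linarith)
  have hε1 : ε ≤ γ / 2 := min_le_left _ _
  have hε2 : ε ≤ (δ - γ) / 2 := min_le_right _ _
  -- per-component bound from hineq
  have hb1 : ∀ t ∈ Set.Ici (0:ℝ), |Real.exp (-γ * t) * (h₁'' t - γ * h₁' t)| ≤
      C * Real.exp (-δ * t) * Real.sqrt (h₁ t ^ 2 + h₂ t ^ 2) := fun t ht =>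
    (abs_le_sqrt_sq_add_sq _ _).trans (hineq t ht)
  have hb2 : ∀ t ∈ Set.Ici (0:ℝ), |Real.exp (-γ * t) * (h₂'' t - γ * h₂' t)| ≤
      C * Real.exp (-δ * t) * Real.sqrt (h₁ t ^ 2 + h₂ t ^ 2) := by
    intro t ht
    refine le_trans ?_ (hineq t ht)
    rw [add_comm ((Real.exp (-γ * t) * (h₁'' t - γ * h₁' t)) ^ 2)]
    exact abs_le_sqrt_sq_add_sq _ _
  -- key bootstrap step
  have hkey : ∀ (f' f'' : ℝ → ℝ),
      (∀ t ∈ Set.Ici (0:ℝ), HasDerivWithinAt f' (f'' t) (Set.Ici 0) t) →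
      (∀ t ∈ Set.Ici (0:ℝ), |Real.exp (-γ * t) * (f'' t - γ * f' t)| ≤
        C * Real.exp (-δ * t) * Real.sqrt (h₁ t ^ 2 + h₂ t ^ 2)) →
      Filter.Tendsto (fun t => Real.exp (-γ * t) * f' t) Filter.atTop (nhds 0) →
      ∀ B c : ℝ, 0 < B → c < δ →
      (∀ t ≥ (0:ℝ), Real.sqrt (h₁ t ^ 2 + h₂ t ^ 2) ≤ B * Real.exp (c * t)) →
      ∀ t ≥ (0:ℝ), |f' t| ≤ (C * B / (δ - c)) * Real.exp ((c + γ - δ) * t) := by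
    intro f' f'' hdf hbnd hlim B c hB hcδ hgr
    set g : ℝ → ℝ := fun s => Real.exp (-γ * s) * f' s with hgdef
    have hg : ∀ t ∈ Set.Ici (0:ℝ),
        HasDerivWithinAt g (Real.exp (-γ * t) * (f'' t - γ * f' t)) (Set.Ici 0) t := by
      intro t ht
      have he : HasDerivAt (fun s : ℝ => Real.exp (-γ * s)) (Real.exp (-γ * t) * (-γ)) t := by
        simpa using (HasDerivAt.exp ((hasDerivAt_id t).const_mul (-γ)))
      have := (he.hasDerivWithinAt (s := Set.Ici 0)).mul (hdf t ht)
      refine this.congr_deriv ?_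
      ring
    have hgb : ∀ t ∈ Set.Ici (0:ℝ),
        |Real.exp (-γ * t) * (f'' t - γ * f' t)| ≤ (C * B) * Real.exp ((c - δ) * t) := by
      intro t ht
      refine (hbnd t ht).trans ?_
      have h1 : Real.sqrt (h₁ t ^ 2 + h₂ t ^ 2) ≤ B * Real.exp (c * t) := hgr t ht
      have h2 : (0:ℝ) ≤ C * Real.exp (-δ * t) := by positivity
      calc C * Real.exp (-δ * t) * Real.sqrt (h₁ t ^ 2 + h₂ t ^ 2)
          ≤ C * Real.exp (-δ * t) * (B * Real.exp (c * t)) :=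
            mul_le_mul_of_nonneg_left h1 h2
        _ = (C * B) * Real.exp ((c - δ) * t) := by
            rw [show (c - δ) * t = -δ * t + c * t by ring, Real.exp_add]; ring
    have ha : c - δ ≠ 0 := by linarith
    have hginc := abs_incr_le g (fun t => Real.exp (-γ * t) * (f'' t - γ * f' t)) hg
      (C * B) (c - δ) ha hgb
    intro t ht
    have hgt : |g t| ≤ (C * B / (δ - c)) * Real.exp ((c - δ) * t) := by
      have htend : Filter.Tendsto (fun T => |g T - g t|) Filter.atTop (nhds (|0 - g t|)) :=
        (hlim.sub tendsto_const_nhds).abs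
      rw [zero_sub, abs_neg] at htend
      refine le_of_tendsto htend ?_
      filter_upwards [eventually_ge_atTop t] with T hT
      have h1 := hginc t T ht hT
      have h2 : C * B / (c - δ) = -(C * B / (δ - c)) := by
        rw [show c - δ = -(δ - c) by ring, div_neg]
      rw [h2] at h1
      have h3 : (0:ℝ) ≤ C * B / (δ - c) := div_nonneg (by positivity) (by linarith)
      have h4 : (0:ℝ) ≤ Real.exp ((c - δ) * T) := (Real.exp_pos _).le
      nlinarith
    have hft : f' t = Real.exp (γ * t) * g t := by
      rw [hgdef]
      simp only
      rw [← mul_assoc, ← Real.exp_add]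
      simp
    rw [hft, abs_mul, abs_of_pos (Real.exp_pos _)]
    calc Real.exp (γ * t) * |g t|
        ≤ Real.exp (γ * t) * ((C * B / (δ - c)) * Real.exp ((c - δ) * t)) :=
          mul_le_mul_of_nonneg_left hgt (Real.exp_pos _).le
      _ = (C * B / (δ - c)) * Real.exp ((c + γ - δ) * t) := by
          rw [show (c + γ - δ) * t = γ * t + (c - δ) * t by ring, Real.exp_add]; ring
  -- the bootstrap induction
  have hboot : ∀ n : ℕ, ∃ B > (0:ℝ), ∀ t ≥ (0:ℝ),
      Real.sqrt (h₁ t ^ 2 + h₂ t ^ 2) ≤ B * Real.exp ((max (γ / 2 - n * (δ - γ)) ε) * t) := by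
    intro n
    induction n with
    | zero =>
      refine ⟨C', hC', fun t ht => ?_⟩
      have h0 : max (γ / 2 - (0:ℕ) * (δ - γ)) ε = γ / 2 := by
        push_cast
        rw [zero_mul, sub_zero, max_eq_left hε1]
      rw [h0]
      exact hgrowth t ht
    | succ n ih =>
      obtain ⟨B, hB, hBb⟩ := ih
      set c : ℝ := max (γ / 2 - n * (δ - γ)) ε with hcdef
      set c' : ℝ := max (γ / 2 - (n + 1 : ℕ) * (δ - γ)) ε with hc'def
      have hcpos : 0 < c := lt_of_lt_of_le hε (le_max_right _ _)
      have hc'pos : 0 < c' := lt_of_lt_of_le hε (le_max_right _ _)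
      have hnn : (0:ℝ) ≤ (n:ℝ) * (δ - γ) := mul_nonneg (Nat.cast_nonneg n) (by linarith)
      have hcδ : c < δ := by
        apply max_lt <;> linarith
      have hcc' : c - (δ - γ) ≤ c' := by
        rw [sub_le_iff_le_add, hcdef]
        apply max_le
        · have h1 : γ / 2 - ((n:ℝ) + 1) * (δ - γ) ≤ c' := by
            rw [hc'def]; push_cast; exact le_max_left _ _
          linarith
        · have h2 : ε ≤ c' := le_max_right _ _
          linarith
      set D : ℝ := C * B / (δ - c) with hDdef
      have hDpos : 0 < D := div_pos (by positivity) (by linarith)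
      have hk1 := hkey h₁' h₁'' hd1' hb1 hlim1 B c hB hcδ hBb
      have hk2 := hkey h₂' h₂'' hd2' hb2 hlim2 B c hB hcδ hBb
      have hd1b : ∀ t ∈ Set.Ici (0:ℝ), |h₁' t| ≤ D * Real.exp (c' * t) := by
        intro t ht
        refine (hk1 t ht).trans ?_
        apply mul_le_mul_of_nonneg_left _ hDpos.le
        exact Real.exp_le_exp.2 (mul_le_mul_of_nonneg_right (by linarith) ht)
      have hd2b : ∀ t ∈ Set.Ici (0:ℝ), |h₂' t| ≤ D * Real.exp (c' * t) := by
        intro t ht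
        refine (hk2 t ht).trans ?_
        apply mul_le_mul_of_nonneg_left _ hDpos.le
        exact Real.exp_le_exp.2 (mul_le_mul_of_nonneg_right (by linarith) ht)
      have hi1 := abs_incr_le h₁ h₁' hd1 D c' hc'pos.ne' hd1b
      have hi2 := abs_incr_le h₂ h₂' hd2 D c' hc'pos.ne' hd2b
      have hDc' : 0 < D / c' := div_pos hDpos hc'pos
      refine ⟨|h₁ 0| + |h₂ 0| + 2 * (D / c'),
        by linarith [abs_nonneg (h₁ 0), abs_nonneg (h₂ 0)], fun T hT => ?_⟩
      have hone : (1:ℝ) ≤ Real.exp (c' * T) := Real.one_le_exp (mul_nonneg hc'pos.le hT)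
      have hh1 : |h₁ T| ≤ (|h₁ 0| + D / c') * Real.exp (c' * T) := by
        have := hi1 0 T le_rfl hT
        rw [mul_zero, Real.exp_zero] at this
        have habs : |h₁ T| ≤ |h₁ 0| + |h₁ T - h₁ 0| := by
          have := abs_sub_abs_le_abs_sub (h₁ T) (h₁ 0)
          linarith [abs_nonneg (h₁ T - h₁ 0)]
        nlinarith [abs_nonneg (h₁ 0)]
      have hh2 : |h₂ T| ≤ (|h₂ 0| + D / c') * Real.exp (c' * T) := by
        have := hi2 0 T le_rfl hT
        rw [mul_zero, Real.exp_zero] at this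
        have habs : |h₂ T| ≤ |h₂ 0| + |h₂ T - h₂ 0| := by
          have := abs_sub_abs_le_abs_sub (h₂ T) (h₂ 0)
          linarith [abs_nonneg (h₂ T - h₂ 0)]
        nlinarith [abs_nonneg (h₂ 0)]
      calc Real.sqrt (h₁ T ^ 2 + h₂ T ^ 2) ≤ |h₁ T| + |h₂ T| := sqrt_sq_add_sq_le _ _
        _ ≤ (|h₁ 0| + D / c') * Real.exp (c' * T) + (|h₂ 0| + D / c') * Real.exp (c' * T) := by
            linarith
        _ = (|h₁ 0| + |h₂ 0| + 2 * (D / c')) * Real.exp (c' * T) := by ring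
  -- choose n large enough
  obtain ⟨n, hn⟩ := exists_nat_ge ((γ / 2 - ε) / (δ - γ))
  have hδγ : (0:ℝ) < δ - γ := by linarith
  have hnε : γ / 2 - (n:ℝ) * (δ - γ) ≤ ε := by
    have := (div_le_iff₀ hδγ).1 hn
    linarith
  obtain ⟨B, hB, hBb⟩ := hboot n
  rw [max_eq_right hnε] at hBb
  have hεδ : ε < δ := by linarith
  have hk1 := hkey h₁' h₁'' hd1' hb1 hlim1 B ε hB hεδ hBb
  have hk2 := hkey h₂' h₂'' hd2' hb2 hlim2 B ε hB hεδ hBb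
  set D : ℝ := C * B / (δ - ε) with hDdef
  have hDpos : 0 < D := div_pos (by positivity) (by linarith)
  have hcpos : 0 < δ - γ - ε := by linarith
  have hexp : ∀ t : ℝ, Real.exp ((ε + γ - δ) * t) = Real.exp (-(δ - γ - ε) * t) := by
    intro t; congr 1; ring
  constructor
  · refine ⟨δ - γ - ε, hcpos, 2 * D, fun t ht => ?_⟩
    calc Real.sqrt (h₁' t ^ 2 + h₂' t ^ 2) ≤ |h₁' t| + |h₂' t| := sqrt_sq_add_sq_le _ _
      _ ≤ D * Real.exp ((ε + γ - δ) * t) + D * Real.exp ((ε + γ - δ) * t) := by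
          have p1 := hk1 t ht; have p2 := hk2 t ht
          have q1 := abs_le.1 p1; have q2 := abs_le.1 p2
          have r1 := le_abs_self (h₁' t); have r2 := le_abs_self (h₂' t)
          linarith
      _ = 2 * D * Real.exp (-(δ - γ - ε) * t) := by rw [← hexp]; ring
  · -- convergence via Cauchy
    have hd1b : ∀ t ∈ Set.Ici (0:ℝ), |h₁' t| ≤ D * Real.exp ((ε + γ - δ) * t) := hk1
    have hd2b : ∀ t ∈ Set.Ici (0:ℝ), |h₂' t| ≤ D * Real.exp ((ε + γ - δ) * t) := hk2
    have hane : (ε + γ - δ) ≠ 0 := by linarith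
    have hi1 := abs_incr_le h₁ h₁' hd1 D (ε + γ - δ) hane hd1b
    have hi2 := abs_incr_le h₂ h₂' hd2 D (ε + γ - δ) hane hd2b
    have hcau : ∀ (f f' : ℝ → ℝ),
        (∀ t T : ℝ, 0 ≤ t → t ≤ T →
          |f T - f t| ≤ D / (ε + γ - δ) * (Real.exp ((ε + γ - δ) * T) - Real.exp ((ε + γ - δ) * t))) →
        ∃ L, Filter.Tendsto f Filter.atTop (nhds L) := by
      intro f f' hf
      have hbound : ∀ t T : ℝ, 0 ≤ t → t ≤ T →
          |f T - f t| ≤ D / (δ - γ - ε) * Real.exp ((ε + γ - δ) * t) := by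
        intro t T ht hT
        refine (hf t T ht hT).trans ?_
        have h1 : D / (ε + γ - δ) = -(D / (δ - γ - ε)) := by
          rw [show ε + γ - δ = -(δ - γ - ε) by ring, div_neg]
        rw [h1]
        have h3 : (0:ℝ) ≤ D / (δ - γ - ε) := div_nonneg hDpos.le (by linarith)
        have h4 : (0:ℝ) ≤ Real.exp ((ε + γ - δ) * T) := (Real.exp_pos _).le
        nlinarith
      rw [← cauchy_map_iff_exists_tendsto]
      rw [Metric.cauchy_iff]
      refine ⟨Filter.map_neBot, fun ε' hε' => ?_⟩
      have htend : Filter.Tendsto (fun t : ℝ => 2 * (D / (δ - γ - ε)) * Real.exp ((ε + γ - δ) * t))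
          Filter.atTop (nhds 0) := by
        have h1 : Filter.Tendsto (fun t : ℝ => (ε + γ - δ) * t) Filter.atTop Filter.atBot := by
          apply Filter.Tendsto.const_mul_atTop_of_neg (by linarith : ε + γ - δ < 0) tendsto_id
        have h2 := Real.tendsto_exp_atBot.comp h1
        have := h2.const_mul (2 * (D / (δ - γ - ε)))
        simpa using this
      obtain ⟨t₀, ht₀ε, ht₀0⟩ :=
        ((htend.eventually (gt_mem_nhds hε')).and (eventually_ge_atTop (0:ℝ))).exists
      refine ⟨f '' Set.Ici t₀, Filter.image_mem_map (Ici_mem_atTop t₀), ?_⟩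
      rintro x ⟨s, hs, rfl⟩ y ⟨s', hs', rfl⟩
      rw [Real.dist_eq]
      have b1 := hbound t₀ s ht₀0 hs
      have b2 := hbound t₀ s' ht₀0 hs'
      have : |f s - f s'| ≤ |f s - f t₀| + |f t₀ - f s'| := abs_sub_le _ _ _
      rw [abs_sub_comm (f t₀) (f s')] at this
      calc |f s - f s'| ≤ |f s - f t₀| + |f s' - f t₀| := this
        _ ≤ D / (δ - γ - ε) * Real.exp ((ε + γ - δ) * t₀) +
            D / (δ - γ - ε) * Real.exp ((ε + γ - δ) * t₀) := by linarith
        _ = 2 * (D / (δ - γ - ε)) * Real.exp ((ε + γ - δ) * t₀) := by ring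
        _ < ε' := ht₀ε
    obtain ⟨L₁, hL₁⟩ := hcau h₁ h₁' hi1
    obtain ⟨L₂, hL₂⟩ := hcau h₂ h₂' hi2
    exact ⟨L₁, L₂, hL₁, hL₂⟩
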